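/- Consider the residual map R(x, s, z) = (Px + Aᵀz + q, −Ax + b − s) with P ∈ ℝ^{n×n} symmetric positive semidefinite, A ∈ ℝ^{m×n}, q ∈ ℝⁿ, b ∈ ℝᵐ. Let x* ∈ ℝⁿ and let s* = (s₀*, s₁*), z* = (z₀*, z₁*) ∈ K_soc^m satisfy ⟨s*, z*⟩ = 0 with s₀* > 0, z₀* > 0. Set λ = s₀*/z₀* and μ⁰ = λ‖R(x*, s*, z*)‖_∞, assumed positive. Let c = s* − λz*, let s⁰ be the unique minimizer over the interior of K_soc^m of (1/2)‖s − c‖² − (μ⁰/2)log(s₀² − ‖s₁‖²), let z⁰ = (s⁰ − c)/λ, and x⁰ = x*. Then ‖R(x⁰, s⁰, z⁰)‖_∞ ≤ (1 + (‖Aᵀ‖_∞ + λ)/(2s₀*)) · ‖R(x*, s*, z*)‖_∞, where ‖Aᵀ‖_∞ is the operator ∞-norm of Aᵀ and ‖·‖_∞ on residuals is the maximum absolute entry of the concatenated vector. -/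

import Mathlib

open Matrix

/-- The residual map `R(x, s, z) = (Px + Aᵀz + q, −Ax + b − s)` of the primal-dual
pair of conic programs. -/
def resMap (n m : ℕ) (P : Matrix (Fin n) (Fin n) ℝ) (A : Matrix (Fin m) (Fin n) ℝ)
    (q : Fin n → ℝ) (b : Fin m → ℝ) (x : Fin n → ℝ) (s z : Fin m → ℝ) :
    (Fin n → ℝ) × (Fin m → ℝ) :=
  (P.mulVec x + Aᵀ.mulVec z + q, -(A.mulVec x) + b - s)

/-- `‖s₁‖²`, the squared Euclidean norm of the tail `s₁ = (s i)_{i ≥ 1}` of a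
vector `s ∈ ℝ^{p+1}` written as `(s₀, s₁) ∈ ℝ × ℝᵖ`. -/
def socTailSq (p : ℕ) (s : Fin (p + 1) → ℝ) : ℝ := ∑ i : Fin p, (s i.succ) ^ 2

/-- The smoothing objective for the second-order cone `K_soc^{p+1}`:
`f_μ(s) = (1/2)‖s − c‖² − (μ/2) log(s₀² − ‖s₁‖²)`. -/
noncomputable def socObj' (p : ℕ) (μ : ℝ) (c s : Fin (p + 1) → ℝ) : ℝ :=
  (1 / 2) * ∑ i, (s i - c i) ^ 2 - (μ / 2) * Real.log ((s 0) ^ 2 - socTailSq p s)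

set_option maxHeartbeats 2000000 in
/-- Theorem 2 for the second-order cone: given a complementary pair
`s* = (s₀*, s₁*), z* = (z₀*, z₁*) ∈ K_soc^m` (`m = p + 1`) with `s₀* > 0, z₀* > 0`,
`λ = s₀*/z₀*` and `μ⁰ = λ‖R(x*, s*, z*)‖_∞ > 0`, the warmstart `s⁰` (the minimizer
of the smoothing objective with parameter `μ⁰` at `c = s* − λz*`),
`z⁰ = (s⁰ − c)/λ`, `x⁰ = x*` satisfies
`‖R(x⁰, s⁰, z⁰)‖_∞ ≤ (1 + (‖Aᵀ‖_∞ + λ)/(2s₀*))·‖R(x*, s*, z*)‖_∞`, where `‖Aᵀ‖_∞`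
is the maximum absolute column sum of `A` and the `∞`-norm of a residual is the
maximum absolute entry of the concatenated vector. -/
theorem stmt14 (n p : ℕ) (hnn : (Finset.univ : Finset (Fin n)).Nonempty)
    (P : Matrix (Fin n) (Fin n) ℝ) (hP : P.PosSemidef)
    (A : Matrix (Fin (p + 1)) (Fin n) ℝ) (q : Fin n → ℝ) (b : Fin (p + 1) → ℝ)
    (xstar : Fin n → ℝ) (sstar zstar : Fin (p + 1) → ℝ)
    (hsK : Real.sqrt (socTailSq p sstar) ≤ sstar 0)
    (hzK : Real.sqrt (socTailSq p zstar) ≤ zstar 0)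
    (hcomp : ∑ i, sstar i * zstar i = 0)
    (hs0 : 0 < sstar 0) (hz0 : 0 < zstar 0)
    (lam : ℝ) (hlamdef : lam = sstar 0 / zstar 0)
    (μ0 : ℝ)
    (hμ0def : μ0 = lam * max ‖(resMap n (p + 1) P A q b xstar sstar zstar).1‖
      ‖(resMap n (p + 1) P A q b xstar sstar zstar).2‖)
    (hμ0 : 0 < μ0)
    (c : Fin (p + 1) → ℝ) (hcdef : c = sstar - lam • zstar)
    (s0 : Fin (p + 1) → ℝ)
    (hs0int : Real.sqrt (socTailSq p s0) < s0 0)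
    (hs0min : ∀ s : Fin (p + 1) → ℝ, Real.sqrt (socTailSq p s) < s 0 →
      socObj' p μ0 c s0 ≤ socObj' p μ0 c s)
    (z0 : Fin (p + 1) → ℝ) (hz0def : z0 = lam⁻¹ • (s0 - c)) :
    max ‖(resMap n (p + 1) P A q b xstar s0 z0).1‖
        ‖(resMap n (p + 1) P A q b xstar s0 z0).2‖ ≤
      (1 + ((Finset.univ.sup' hnn fun j => ∑ i, |A i j|) + lam) / (2 * sstar 0)) *
        max ‖(resMap n (p + 1) P A q b xstar sstar zstar).1‖
          ‖(resMap n (p + 1) P A q b xstar sstar zstar).2‖ := by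
  set σ := sstar 0 with hσdef
  set ζ := zstar 0 with hζdef
  set r := max ‖(resMap n (p + 1) P A q b xstar sstar zstar).1‖
      ‖(resMap n (p + 1) P A q b xstar sstar zstar).2‖ with hrdef
  have hr0 : (0:ℝ) ≤ r := le_trans (norm_nonneg _) (le_max_left _ _)
  clear_value σ ζ r
  have hσne : σ ≠ 0 := hs0.ne'
  have hζne : ζ ≠ 0 := hz0.ne'
  have hlam : 0 < lam := by rw [hlamdef]; positivity
  have hσζ : σ = lam * ζ := by rw [hlamdef]; field_simp
  have hSsnn : 0 ≤ socTailSq p sstar := Finset.sum_nonneg (fun i _ => sq_nonneg _)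
  have hSznn : 0 ≤ socTailSq p zstar := Finset.sum_nonneg (fun i _ => sq_nonneg _)
  have hSs_le : socTailSq p sstar ≤ σ^2 := by
    nlinarith [Real.sq_sqrt hSsnn, hsK, Real.sqrt_nonneg (socTailSq p sstar)]
  have hSz_le : socTailSq p zstar ≤ ζ^2 := by
    nlinarith [Real.sq_sqrt hSznn, hzK, Real.sqrt_nonneg (socTailSq p zstar)]
  have hT : σ * ζ + ∑ i : Fin p, sstar i.succ * zstar i.succ = 0 := by
    rw [Fin.sum_univ_succ] at hcomp
    rw [hσdef, hζdef]
    exact hcomp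
  -- the quantities z₀*s₁ᵢ + σ z₁ᵢ all vanish
  have hwsum : ∑ i : Fin p, (ζ * sstar i.succ + σ * zstar i.succ)^2 ≤ 0 := by
    have hexp : ∑ i : Fin p, (ζ * sstar i.succ + σ * zstar i.succ)^2
        = ζ^2 * socTailSq p sstar + σ^2 * socTailSq p zstar
          + 2*σ*ζ * ∑ i : Fin p, sstar i.succ * zstar i.succ := by
      unfold socTailSq
      rw [Finset.mul_sum, Finset.mul_sum, Finset.mul_sum, ← Finset.sum_add_distrib,
        ← Finset.sum_add_distrib]
      exact Finset.sum_congr rfl fun i _ => by ring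
    have hTval : ∑ i : Fin p, sstar i.succ * zstar i.succ = -(σ * ζ) := by linarith
    rw [hexp, hTval]
    linarith [mul_nonneg (sq_nonneg ζ) (sub_nonneg.2 hSs_le),
      mul_nonneg (sq_nonneg σ) (sub_nonneg.2 hSz_le)]
  have hw : ∀ i : Fin p, ζ * sstar i.succ + σ * zstar i.succ = 0 := by
    intro i
    have h := (Finset.sum_eq_zero_iff_of_nonneg (fun i _ => sq_nonneg _)).1
      (le_antisymm hwsum (Finset.sum_nonneg (fun i _ => sq_nonneg _))) i (Finset.mem_univ i)
    exact pow_eq_zero_iff two_ne_zero |>.1 h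
  have hz1 : ∀ i : Fin p, zstar i.succ = -(ζ/σ) * sstar i.succ := by
    intro i
    field_simp
    linarith [hw i]
  have hSs : socTailSq p sstar = σ^2 := by
    have hcombo : σ * ∑ i : Fin p, sstar i.succ * zstar i.succ
        = -(ζ * socTailSq p sstar) := by
      unfold socTailSq
      rw [Finset.mul_sum, Finset.mul_sum, ← Finset.sum_neg_distrib]
      refine Finset.sum_congr rfl fun i _ => ?_
      linear_combination sstar i.succ * (hw i)
    have hfin : ζ * (σ^2 - socTailSq p sstar) = 0 := by
      linear_combination σ * hT - hcombo
    have := (mul_eq_zero.1 hfin).resolve_left hζne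
    linarith
  -- c = (0, 2 s₁*)
  have hc0 : c 0 = 0 := by
    rw [hcdef]
    simp only [Pi.sub_apply, Pi.smul_apply, smul_eq_mul]
    rw [← hσdef, ← hζdef, hσζ]; ring
  have hcs : ∀ i : Fin p, c i.succ = 2 * sstar i.succ := by
    intro i
    rw [hcdef]
    simp only [Pi.sub_apply, Pi.smul_apply, smul_eq_mul]
    rw [hlamdef]
    field_simp
    linarith [hw i]
  -- the explicit minimizer
  have hμnn : (0:ℝ) ≤ σ^2 + μ0 := by positivity
  set η := Real.sqrt (σ^2 + μ0) with hηdef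
  have hη2 : η^2 = σ^2 + μ0 := Real.sq_sqrt hμnn
  have hηgt : σ < η := by
    rw [hηdef]
    exact (Real.lt_sqrt hs0.le).2 (by linarith)
  have hηpos : 0 < η := lt_trans hs0 hηgt
  clear_value η
  set shat : Fin (p+1) → ℝ := fun i => if i = 0 then η else sstar i with hshatdef
  have hshat0 : shat 0 = η := by simp [hshatdef]
  have hshats : ∀ i : Fin p, shat i.succ = sstar i.succ := by
    intro i; simp [hshatdef, Fin.succ_ne_zero i]
  have hshattail : socTailSq p shat = σ^2 := by
    rw [← hSs]; exact Finset.sum_congr rfl fun i _ => by rw [hshats i]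
  have hshatint : Real.sqrt (socTailSq p shat) < shat 0 := by
    rw [hshattail, Real.sqrt_sq hs0.le, hshat0]; exact hηgt
  -- pin down s0
  have hs0pos : 0 < s0 0 := lt_of_le_of_lt (Real.sqrt_nonneg _) hs0int
  have hdpos : 0 < (s0 0)^2 - socTailSq p s0 := by
    have := (Real.sqrt_lt' hs0pos).1 hs0int; linarith
  set d := (s0 0)^2 - socTailSq p s0 with hddef
  set a := ∑ i : Fin p, (s0 i.succ - sstar i.succ)^2 with hadef
  have hann : 0 ≤ a := Finset.sum_nonneg fun i _ => sq_nonneg _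
  clear_value d a
  have hobj_s0 : socObj' p μ0 c s0
      = (1/2) * ((s0 0)^2 + ∑ i : Fin p, (s0 i.succ - 2*sstar i.succ)^2)
        - (μ0/2) * Real.log d := by
    unfold socObj'
    have h1 : ∑ i, (s0 i - c i)^2
        = (s0 0)^2 + ∑ i : Fin p, (s0 i.succ - 2*sstar i.succ)^2 := by
      rw [Fin.sum_univ_succ, hc0]
      rw [sub_zero]
      congr 1
      exact Finset.sum_congr rfl fun i _ => by rw [hcs i]
    rw [h1, ← hddef]
  have hobj_shat : socObj' p μ0 c shat
      = (1/2) * (η^2 + σ^2) - (μ0/2) * Real.log μ0 := by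
    unfold socObj'
    have h1 : ∑ i, (shat i - c i)^2 = η^2 + σ^2 := by
      rw [Fin.sum_univ_succ, hc0, hshat0, sub_zero]
      congr 1
      rw [← hSs]
      exact Finset.sum_congr rfl fun i _ => by rw [hshats i, hcs i]; ring
    have h2 : (shat 0)^2 - socTailSq p shat = μ0 := by rw [hshat0, hshattail, hη2]; ring
    rw [h1, h2]
  have hQid : ∑ i : Fin p, (s0 i.succ - 2*sstar i.succ)^2
      = 2*a - socTailSq p s0 + 2 * socTailSq p sstar := by
    unfold socTailSq
    rw [hadef, Finset.mul_sum, Finset.mul_sum, ← Finset.sum_sub_distrib,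
      ← Finset.sum_add_distrib]
    exact Finset.sum_congr rfl fun i _ => by ring
  have hmin := hs0min shat hshatint
  rw [hobj_s0, hobj_shat, hQid, hSs] at hmin
  have h1 : a + (d - μ0)/2 ≤ (μ0/2)*(Real.log d - Real.log μ0) := by
    have hds : socTailSq p s0 = (s0 0)^2 - d := by rw [hddef]; ring
    rw [hds] at hmin
    linarith [hmin, hη2]
  have hlog_le : Real.log d - Real.log μ0 ≤ d/μ0 - 1 := by
    have h := Real.log_le_sub_one_of_pos (div_pos hdpos hμ0)
    rwa [Real.log_div hdpos.ne' hμ0.ne'] at h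
  have heqd : (μ0/2) * (d/μ0 - 1) = (d - μ0)/2 := by field_simp
  have h2 : (μ0/2)*(Real.log d - Real.log μ0) ≤ (d - μ0)/2 := by
    have h := mul_le_mul_of_nonneg_left hlog_le (by positivity : (0:ℝ) ≤ μ0/2)
    linarith [heqd]
  have ha0 : a = 0 := le_antisymm (by linarith) hann
  have htail : ∀ i : Fin p, s0 i.succ = sstar i.succ := by
    intro i
    rw [hadef] at ha0
    have h := (Finset.sum_eq_zero_iff_of_nonneg (fun i _ => sq_nonneg _)).1 ha0 i
      (Finset.mem_univ i)
    have := pow_eq_zero_iff two_ne_zero |>.1 h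
    linarith
  have hdμ : d = μ0 := by
    by_contra hne
    have hne1 : d/μ0 ≠ 1 := by
      intro h; exact hne ((div_eq_one_iff_eq hμ0.ne').1 h)
    have hlt : Real.log (d/μ0) < d/μ0 - 1 :=
      Real.log_lt_sub_one_of_pos (div_pos hdpos hμ0) hne1
    rw [Real.log_div hdpos.ne' hμ0.ne'] at hlt
    have h := mul_lt_mul_of_pos_left hlt (by positivity : (0:ℝ) < μ0/2)
    linarith [heqd]
  have hTs0 : socTailSq p s0 = σ^2 := by
    rw [← hSs]; exact Finset.sum_congr rfl fun i _ => by rw [htail i]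
  have hs00 : s0 0 = η := by
    have hsq : (s0 0)^2 = η^2 := by
      rw [hη2]; rw [hddef, hTs0] at hdμ; linarith
    calc s0 0 = Real.sqrt ((s0 0)^2) := (Real.sqrt_sq hs0pos.le).symm
    _ = Real.sqrt (η^2) := by rw [hsq]
    _ = η := Real.sqrt_sq hηpos.le
  -- difference vectors
  have hzs : ∀ i : Fin p, zstar i.succ = -lam⁻¹ * sstar i.succ := by
    intro i
    rw [hz1 i, hlamdef]
    field_simp
  have hζσ : ζ = σ / lam := by rw [hlamdef]; field_simp
  set t := lam⁻¹ * (η - σ) with htdef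
  have hδnn : 0 ≤ η - σ := by linarith
  have htnn : 0 ≤ t := mul_nonneg (inv_nonneg.2 hlam.le) hδnn
  have hdiff : ∀ i : Fin (p+1), z0 i - zstar i = if i = 0 then t else 0 := by
    intro i
    rw [hz0def]
    refine Fin.cases ?_ (fun j => ?_) i
    · simp only [Pi.smul_apply, Pi.sub_apply, smul_eq_mul, if_pos rfl]
      rw [hc0, hs00, ← hζdef, hζσ, htdef]
      field_simp
      rw [if_pos trivial, sub_zero]
      field_simp
    · simp only [Pi.smul_apply, Pi.sub_apply, smul_eq_mul, if_neg (Fin.succ_ne_zero j)]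
      rw [hcs j, htail j, hzs j]
      ring
  have hsdiff : ∀ i : Fin (p+1), s0 i - sstar i = if i = 0 then (η - σ) else 0 := by
    intro i
    refine Fin.cases ?_ (fun j => ?_) i
    · rw [if_pos rfl, hs00, ← hσdef]
    · rw [if_neg (Fin.succ_ne_zero j), htail j, sub_self]
  -- residual bounds
  set N := Finset.univ.sup' hnn fun j => ∑ i, |A i j| with hNdef
  have hNnn : 0 ≤ N := by
    rw [hNdef]
    refine le_trans ?_ (Finset.le_sup' (fun j => ∑ i, |A i j|) hnn.choose_spec)
    exact Finset.sum_nonneg fun i _ => abs_nonneg _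
  have hAbd : ∀ j, |A 0 j| ≤ N := by
    intro j
    rw [hNdef]
    refine le_trans (Finset.single_le_sum (fun i _ => abs_nonneg (A i j)) (Finset.mem_univ 0))
      (Finset.le_sup' (fun j => ∑ i, |A i j|) (Finset.mem_univ j))
  clear_value t N
  have hR1 : ‖(resMap n (p+1) P A q b xstar s0 z0).1‖
      ≤ ‖(resMap n (p+1) P A q b xstar sstar zstar).1‖ + N * t := by
    refine (pi_norm_le_iff_of_nonneg (add_nonneg (norm_nonneg _) (mul_nonneg hNnn htnn))).2 ?_
    intro j
    have hentry : (resMap n (p+1) P A q b xstar s0 z0).1 j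
        = (resMap n (p+1) P A q b xstar sstar zstar).1 j + A 0 j * t := by
      simp only [resMap, Pi.add_apply, Matrix.mulVec, Matrix.transpose_apply, dotProduct]
      have hsum : ∑ i, A i j * z0 i = ∑ i, A i j * zstar i + A 0 j * t := by
        have h : ∑ i, A i j * z0 i
            = ∑ i : Fin (p+1), (A i j * zstar i + A i j * (if i = 0 then t else 0)) := by
          refine Finset.sum_congr rfl fun i _ => ?_
          rw [← hdiff i]; ring
        rw [h, Finset.sum_add_distrib]
        congr 1
        rw [Fin.sum_univ_succ]
        simp [Fin.succ_ne_zero]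
      rw [hsum]
      ring
    rw [hentry]
    refine le_trans (norm_add_le _ _) (add_le_add (norm_le_pi_norm _ j) ?_)
    rw [Real.norm_eq_abs, abs_mul, abs_of_nonneg htnn]
    exact mul_le_mul_of_nonneg_right (hAbd j) htnn
  have hR2 : ‖(resMap n (p+1) P A q b xstar s0 z0).2‖
      ≤ ‖(resMap n (p+1) P A q b xstar sstar zstar).2‖ + (η - σ) := by
    refine (pi_norm_le_iff_of_nonneg (add_nonneg (norm_nonneg _) hδnn)).2 ?_
    intro j
    have hentry : (resMap n (p+1) P A q b xstar s0 z0).2 j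
        = (resMap n (p+1) P A q b xstar sstar zstar).2 j
          - (if j = 0 then (η - σ) else 0) := by
      simp only [resMap, Pi.add_apply, Pi.sub_apply, Pi.neg_apply]
      rw [← hsdiff j]
      ring
    rw [hentry]
    refine le_trans (norm_sub_le _ _) (add_le_add (norm_le_pi_norm _ j) ?_)
    rw [Real.norm_eq_abs]
    split
    · rw [abs_of_nonneg hδnn]
    · simpa using hδnn
  -- numerics
  have hμr : μ0 = lam * r := hμ0def
  have hδle : η - σ ≤ μ0/(2*σ) := by
    have hle : η ≤ σ + μ0/(2*σ) := by
      rw [hηdef, show σ + μ0/(2*σ) = Real.sqrt ((σ + μ0/(2*σ))^2) from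
        (Real.sqrt_sq (by positivity)).symm]
      apply Real.sqrt_le_sqrt
      have hexp : (σ + μ0/(2*σ))^2 = σ^2 + μ0 + (μ0/(2*σ))^2 := by field_simp; ring
      linarith [hexp, sq_nonneg (μ0/(2*σ))]
    linarith
  have ht_le : t ≤ r/(2*σ) := by
    rw [htdef]
    have h := mul_le_mul_of_nonneg_left hδle (inv_nonneg.2 hlam.le)
    have heq : lam⁻¹ * (μ0/(2*σ)) = r/(2*σ) := by rw [hμr]; field_simp
    linarith
  have hδle' : η - σ ≤ lam * (r/(2*σ)) := by
    rw [hμr] at hδle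
    have : lam * r / (2*σ) = lam * (r/(2*σ)) := by ring
    linarith
  have hexp : (1 + (N + lam)/(2*σ)) * r = r + N*(r/(2*σ)) + lam*(r/(2*σ)) := by
    field_simp
    ring
  have hrd : 0 ≤ r/(2*σ) := by positivity
  apply max_le
  · refine le_trans hR1 ?_
    have := mul_le_mul_of_nonneg_left ht_le hNnn
    have h1 : ‖(resMap n (p+1) P A q b xstar sstar zstar).1‖ ≤ r := by rw [hrdef]; exact le_max_left _ _
    linarith [hexp, this, h1, mul_nonneg hlam.le hrd]
  · refine le_trans hR2 ?_
    have h1 : ‖(resMap n (p+1) P A q b xstar sstar zstar).2‖ ≤ r := by rw [hrdef]; exact le_max_right _ _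
    linarith [hexp, hδle', h1, mul_nonneg hNnn hrd]
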